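/- Let d ≥ 1, let ω = exp(2πi/d), let X be the shift matrix with entries X a b = 1 if a = b + 1 (mod d) and 0 otherwise, let Z be the clock matrix with entries Z a a = ω^a and 0 off the diagonal, and set U i j = X^i * Z^j. Let P : Matrix (Fin d) (Fin d) ℝ have nonnegative entries, and define the generalized Pauli map Φ_P(ρ) = ∑_{i,j} (P i j : ℂ) • (U i j * ρ * (U i j)ᴴ). If every row of P has a nonzero entry, or every column of P has a nonzero entry, then there exists a unit vector ψ : Fin d → ℂ such that Φ_P(ψψᴴ) is positive definite (equivalently, rank Φ_P(ψψᴴ) = d). -/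

import Mathlib

open Matrix
open scoped ComplexOrder

/-- The shift matrix `X` with `X a b = 1` iff `a = b + 1` (mod `d`). -/
def shiftMatrix (d : ℕ) [NeZero d] : Matrix (Fin d) (Fin d) ℂ :=
  Matrix.of fun a b => if a = b + 1 then 1 else 0

/-- The clock matrix `Z = diag(1, ω, ω², …)` with `ω = exp(2πi/d)`. -/
noncomputable def clockMatrix (d : ℕ) : Matrix (Fin d) (Fin d) ℂ :=
  Matrix.diagonal fun a => Complex.exp (2 * Real.pi * Complex.I / d) ^ (a : ℕ)

/-- The discrete Heisenberg–Weyl unitaries `U i j = Xⁱ Zʲ`. -/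
noncomputable def weylU {d : ℕ} [NeZero d] (i j : Fin d) : Matrix (Fin d) (Fin d) ℂ :=
  shiftMatrix d ^ (i : ℕ) * clockMatrix d ^ (j : ℕ)

/-- The generalized Pauli channel associated with a probability matrix `P`. -/
noncomputable def pauliChannel {d : ℕ} [NeZero d] (P : Matrix (Fin d) (Fin d) ℝ)
    (ρ : Matrix (Fin d) (Fin d) ℂ) : Matrix (Fin d) (Fin d) ℂ :=
  ∑ i, ∑ j, (P i j : ℂ) • (weylU i j * ρ * (weylU i j)ᴴ)

/-! ### Auxiliary lemmas -/

lemma mulVec_sum' {d k : ℕ} (M : Fin k → Matrix (Fin d) (Fin d) ℂ) (x : Fin d → ℂ) :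
    (∑ i, M i) *ᵥ x = ∑ i, M i *ᵥ x := by
  ext a
  simp only [mulVec, dotProduct, Matrix.sum_apply, Finset.sum_apply, Finset.sum_mul]
  rw [Finset.sum_comm]

lemma dotProduct_sum' {d k : ℕ} (v : Fin k → (Fin d → ℂ)) (x : Fin d → ℂ) :
    x ⬝ᵥ (∑ i, v i) = ∑ i, x ⬝ᵥ v i := by
  simp only [dotProduct, Finset.sum_apply, Finset.mul_sum]
  rw [Finset.sum_comm]

lemma vecMulVec_mulVec' {d : ℕ} [NeZero d] (w v x : Fin d → ℂ) :
    (vecMulVec w v) *ᵥ x = (v ⬝ᵥ x) • w := by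
  ext a
  simp only [mulVec, vecMulVec_apply, dotProduct, Pi.smul_apply, smul_eq_mul,
    Finset.sum_mul, Finset.mul_sum]
  exact Finset.sum_congr rfl fun b _ => by ring

lemma conj_vecMulVec {d : ℕ} [NeZero d] (M : Matrix (Fin d) (Fin d) ℂ) (ψ : Fin d → ℂ) :
    M * vecMulVec ψ (star ψ) * Mᴴ = vecMulVec (M *ᵥ ψ) (star (M *ᵥ ψ)) := by
  ext a b
  simp only [mul_apply, vecMulVec_apply, conjTranspose_apply, mulVec, dotProduct,
    Pi.star_apply, star_sum, Finset.sum_mul, Finset.mul_sum, star_mul']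
  exact Finset.sum_congr rfl fun c _ => Finset.sum_congr rfl fun e _ => by ring

lemma posDef_sum_vecMulVec {d : ℕ} [NeZero d] (c : Fin d → Fin d → ℝ) (hc : ∀ i j, 0 ≤ c i j)
    (w : Fin d → Fin d → (Fin d → ℂ))
    (h : ∀ x : Fin d → ℂ, x ≠ 0 → ∃ i j, c i j ≠ 0 ∧ star (w i j) ⬝ᵥ x ≠ 0) :
    (∑ i, ∑ j, (c i j : ℂ) • vecMulVec (w i j) (star (w i j))).PosDef := by
  rw [posDef_iff_dotProduct_mulVec]
  constructor
  · ext a b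
    simp only [conjTranspose_apply, Matrix.sum_apply, Matrix.smul_apply, vecMulVec_apply,
      star_sum, star_smul, star_mul', Pi.star_apply, star_star, smul_eq_mul,
      Complex.star_def, Complex.conj_ofReal, Complex.conj_conj]
    exact Finset.sum_congr rfl fun i _ => Finset.sum_congr rfl fun j _ => by ring
  · intro x hx
    have single : ∀ (u : Fin d → ℂ), star x ⬝ᵥ ((vecMulVec u (star u)) *ᵥ x)
        = star (star u ⬝ᵥ x) * (star u ⬝ᵥ x) := by
      intro u
      simp only [vecMulVec_mulVec', dotProduct, Pi.smul_apply, smul_eq_mul, Pi.star_apply,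
        star_sum, star_mul', star_star, Finset.sum_mul, Finset.mul_sum]
      rw [Finset.sum_comm]
      exact Finset.sum_congr rfl fun a _ => Finset.sum_congr rfl fun b _ => by ring
    have key : star x ⬝ᵥ ((∑ i, ∑ j, (c i j : ℂ) • vecMulVec (w i j) (star (w i j))) *ᵥ x)
        = ∑ i, ∑ j, (c i j : ℂ) * (star (star (w i j) ⬝ᵥ x) * (star (w i j) ⬝ᵥ x)) := by
      rw [mulVec_sum', dotProduct_sum']
      refine Finset.sum_congr rfl fun i _ => ?_
      rw [mulVec_sum', dotProduct_sum']
      refine Finset.sum_congr rfl fun j _ => ?_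
      rw [Matrix.smul_mulVec, dotProduct_smul, smul_eq_mul, single]
    rw [key]
    obtain ⟨i0, j0, hc0, hs0⟩ := h x hx
    have hterm : ∀ i j, 0 ≤ (c i j : ℂ) * (star (star (w i j) ⬝ᵥ x) * (star (w i j) ⬝ᵥ x)) :=
      fun i j => mul_nonneg (by exact_mod_cast hc i j) (star_mul_self_nonneg _)
    have hpos : 0 < (c i0 j0 : ℂ) * (star (star (w i0 j0) ⬝ᵥ x) * (star (w i0 j0) ⬝ᵥ x)) := by
      refine mul_pos ?_ ?_
      · exact_mod_cast lt_of_le_of_ne (hc i0 j0) (Ne.symm hc0)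
      · refine lt_of_le_of_ne (star_mul_self_nonneg _) (Ne.symm ?_)
        intro hz
        rcases mul_eq_zero.mp hz with h' | h'
        · exact hs0 (by simpa using h')
        · exact hs0 h'
    exact Finset.sum_pos' (fun i _ => Finset.sum_nonneg fun j _ => hterm i j)
      ⟨i0, Finset.mem_univ _, Finset.sum_pos' (fun j _ => hterm i0 j)
        ⟨j0, Finset.mem_univ _, hpos⟩⟩

open Fin.NatCast Fin.CommRing in
lemma shift_pow {d : ℕ} [NeZero d] (n : ℕ) :
    shiftMatrix d ^ n = Matrix.of fun a b => if a = b + (n : Fin d) then 1 else 0 := by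
  induction n with
  | zero => ext a b; simp [Matrix.one_apply, eq_comm]
  | succ n ih =>
    rw [pow_succ, ih]
    ext a b
    simp only [Matrix.mul_apply, Matrix.of_apply, shiftMatrix, ite_mul, one_mul, zero_mul]
    rw [Finset.sum_eq_single (b + 1)]
    · simp [show ((n + 1 : ℕ) : Fin d) = (n : Fin d) + 1 from by push_cast; ring,
        show b + ((n:Fin d) + 1) = b + 1 + (n:Fin d) from by ring]
    · intro c _ hc; simp [hc]
    · simp

open Fin.NatCast Fin.CommRing in
lemma weylU_mulVec {d : ℕ} [NeZero d] (i j : Fin d) (ψ : Fin d → ℂ) :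
    (weylU i j) *ᵥ ψ
      = fun a => (Complex.exp (2 * Real.pi * Complex.I / d) ^ ((a - i : Fin d) : ℕ)) ^ (j : ℕ)
          * ψ (a - i) := by
  ext a
  rw [weylU, ← Matrix.mulVec_mulVec, clockMatrix, Matrix.diagonal_pow, shift_pow]
  simp only [Fin.cast_val_eq_self]
  have h1 : ∀ v : Fin d → ℂ,
      ((Matrix.of fun a b => if a = b + i then (1:ℂ) else 0) *ᵥ v) a = v (a - i) := by
    intro v
    simp only [mulVec, dotProduct, Matrix.of_apply, ite_mul, one_mul, zero_mul]
    rw [Finset.sum_eq_single (a - i)]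
    · simp
    · intro b _ hb; rw [if_neg]; intro h; exact hb (by rw [h]; ring)
    · simp
  rw [h1, Matrix.mulVec_diagonal]
  simp

lemma geom_fin {d : ℕ} [NeZero d] (z : ℂ) (hz : z ^ d = 1) (h1 : z ≠ 1) :
    ∑ j : Fin d, z ^ (j : ℕ) = 0 := by
  have := geom_sum_mul z d
  rw [hz, sub_self] at this
  rw [Fin.sum_univ_eq_sum_range]
  rcases mul_eq_zero.mp this with h | h
  · exact h
  · exact absurd (sub_eq_zero.mp h) h1

lemma innerSumRoots {d : ℕ} [NeZero d] {ω : ℂ} (hprim : IsPrimitiveRoot ω d) (k a : Fin d) :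
    ∑ j : Fin d, (ω ^ ((k : ℕ) + (a : ℕ))) ^ (j : ℕ) = if a + k = 0 then (d : ℂ) else 0 := by
  have hdvd : (a + k = 0) ↔ d ∣ ((k : ℕ) + (a : ℕ)) := by
    rw [Fin.ext_iff, Fin.val_add, Fin.val_zero, Nat.add_comm (a : ℕ)]
    exact ⟨fun h => Nat.dvd_of_mod_eq_zero h, fun h => Nat.mod_eq_zero_of_dvd h⟩
  by_cases h : a + k = 0
  · rw [if_pos h]
    have : ω ^ ((k : ℕ) + (a : ℕ)) = 1 := (hprim.pow_eq_one_iff_dvd _).mpr (hdvd.mp h)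
    simp [this]
  · rw [if_neg h]
    refine geom_fin _ ?_ ?_
    · rw [← pow_mul, mul_comm, pow_mul, hprim.pow_eq_one, one_pow]
    · intro h1
      exact h (hdvd.mpr ((hprim.pow_eq_one_iff_dvd _).mp h1))

lemma dft_inj {d : ℕ} [NeZero d] {ω : ℂ} (hprim : IsPrimitiveRoot ω d) (y : Fin d → ℂ)
    (hy : ∀ j : Fin d, ∑ a : Fin d, (ω ^ (a : ℕ)) ^ (j : ℕ) * y a = 0) : y = 0 := by
  funext b
  have h0 : ∑ j : Fin d, (ω ^ ((-b : Fin d) : ℕ)) ^ (j : ℕ)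
      * (∑ a : Fin d, (ω ^ (a : ℕ)) ^ (j : ℕ) * y a) = 0 := by
    simp [hy]
  have h1 : ∑ j : Fin d, (ω ^ ((-b : Fin d) : ℕ)) ^ (j : ℕ)
        * (∑ a : Fin d, (ω ^ (a : ℕ)) ^ (j : ℕ) * y a)
      = ∑ a : Fin d, (∑ j : Fin d, (ω ^ (((-b : Fin d) : ℕ) + (a : ℕ))) ^ (j : ℕ)) * y a := by
    simp only [Finset.mul_sum]
    rw [Finset.sum_comm]
    refine Finset.sum_congr rfl fun a _ => ?_
    rw [Finset.sum_mul]
    refine Finset.sum_congr rfl fun j _ => ?_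
    rw [pow_add, mul_pow]
    ring
  rw [h1] at h0
  have h2 : ∀ a : Fin d, (if a + (-b) = 0 then (d : ℂ) else 0) * y a
      = if a = b then (d : ℂ) * y a else 0 := by
    intro a
    by_cases h : a = b
    · simp [h]
    · rw [if_neg (fun hh => h (by rwa [add_neg_eq_zero] at hh)), if_neg h, zero_mul]
  simp only [innerSumRoots hprim, h2, Finset.sum_ite_eq', Finset.mem_univ, if_true] at h0
  have hd : (d : ℂ) ≠ 0 := Nat.cast_ne_zero.mpr (NeZero.ne d)
  simpa [hd] using h0

theorem stmt5 {d : ℕ} [NeZero d] (P : Matrix (Fin d) (Fin d) ℝ)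
    (hP : ∀ i j, 0 ≤ P i j)
    (hrc : (∀ i, ∃ j, P i j ≠ 0) ∨ (∀ j, ∃ i, P i j ≠ 0)) :
    ∃ ψ : Fin d → ℂ, (∑ i, Complex.normSq (ψ i) = 1) ∧
      (pauliChannel P (vecMulVec ψ (star ψ))).PosDef := by
  set ω : ℂ := Complex.exp (2 * Real.pi * Complex.I / d) with hωdef
  have hprim : IsPrimitiveRoot ω d := Complex.isPrimitiveRoot_exp d (NeZero.ne d)
  have hchan : ∀ ψ : Fin d → ℂ, pauliChannel P (vecMulVec ψ (star ψ))
      = ∑ i, ∑ j, (P i j : ℂ) • vecMulVec ((weylU i j) *ᵥ ψ) (star ((weylU i j) *ᵥ ψ)) := by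
    intro ψ
    unfold pauliChannel
    exact Finset.sum_congr rfl fun i _ => Finset.sum_congr rfl fun j _ => by
      rw [conj_vecMulVec]
  rcases hrc with hrow | hcol
  · -- every row has a nonzero entry: take ψ = e₀
    refine ⟨fun a => if a = 0 then 1 else 0, ?_, ?_⟩
    · simp [apply_ite Complex.normSq, Finset.sum_ite_eq', Finset.mem_univ]
    · rw [hchan]
      refine posDef_sum_vecMulVec (fun i j => P i j) hP _ ?_
      intro x hx
      obtain ⟨a0, ha0⟩ := Function.ne_iff.mp hx
      obtain ⟨j0, hj0⟩ := hrow a0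
      refine ⟨a0, j0, hj0, ?_⟩
      have hw : (weylU a0 j0) *ᵥ (fun a => if a = 0 then (1:ℂ) else 0)
          = fun a => if a = a0 then 1 else 0 := by
        rw [weylU_mulVec]
        funext a
        by_cases h : a = a0
        · simp [h, sub_self]
        · simp [h, sub_ne_zero.mpr h]
      rw [hw]
      have : (star (fun a => if a = a0 then (1:ℂ) else 0)) ⬝ᵥ x = x a0 := by
        simp [dotProduct, apply_ite (star : ℂ → ℂ), Finset.sum_ite_eq', ite_mul]
      rw [this]
      simpa using ha0
  · -- every column has a nonzero entry: take ψ uniform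
    have hd0 : (0:ℝ) < d := by exact_mod_cast Nat.pos_of_ne_zero (NeZero.ne d)
    have hsq : Real.sqrt d * Real.sqrt d = d := Real.mul_self_sqrt (le_of_lt hd0)
    have hsqne : Real.sqrt d ≠ 0 := by positivity
    set c : ℝ := (Real.sqrt d)⁻¹ with hcdef
    have hcne : (c : ℂ) ≠ 0 := Complex.ofReal_ne_zero.mpr (inv_ne_zero hsqne)
    refine ⟨fun _ => (c : ℂ), ?_, ?_⟩
    · simp only [Complex.normSq_ofReal, Finset.sum_const, Finset.card_univ, Fintype.card_fin,
        nsmul_eq_mul]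
      rw [hcdef, ← mul_inv, hsq]
      exact mul_inv_cancel₀ (ne_of_gt hd0)
    · rw [hchan]
      refine posDef_sum_vecMulVec (fun i j => P i j) hP _ ?_
      intro x hx
      set y : Fin d → ℂ := star x with hydef
      have hy : y ≠ 0 := by
        intro h
        apply hx
        have := congrArg star h
        simpa [hydef] using this
      have hGex : ∃ j : Fin d, ∑ a : Fin d, (ω ^ (a : ℕ)) ^ (j : ℕ) * y a ≠ 0 := by
        by_contra hcon
        push_neg at hcon
        exact hy (dft_inj hprim y hcon)
      obtain ⟨j0, hG⟩ := hGex
      obtain ⟨i0, hi0⟩ := hcol j0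
      refine ⟨i0, j0, hi0, ?_⟩
      set S : ℂ := ∑ a : Fin d, (ω ^ ((a - i0 : Fin d) : ℕ)) ^ (j0 : ℕ) * y a with hSdef
      have hS : S ≠ 0 := by
        intro h
        apply hG
        have hphase : (ω ^ ((i0 : Fin d) : ℕ)) ^ (j0 : ℕ) * S
            = ∑ a : Fin d, (ω ^ (a : ℕ)) ^ (j0 : ℕ) * y a := by
          rw [hSdef, Finset.mul_sum]
          refine Finset.sum_congr rfl fun a _ => ?_
          have hadd : ω ^ ((i0 : Fin d) : ℕ) * ω ^ ((a - i0 : Fin d) : ℕ) = ω ^ (a : ℕ) := by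
            rw [← pow_add]
            have h1 : ∀ m : ℕ, ω ^ (m % d) = ω ^ m := by
              intro m
              conv_rhs => rw [← Nat.mod_add_div m d]
              rw [pow_add, pow_mul, hprim.pow_eq_one, one_pow, mul_one]
            have h2 : ((i0 + (a - i0) : Fin d) : ℕ) = ((i0 : ℕ) + ((a - i0 : Fin d) : ℕ)) % d :=
              Fin.val_add _ _
            calc ω ^ ((i0 : ℕ) + ((a - i0 : Fin d) : ℕ))
                = ω ^ (((i0 : ℕ) + ((a - i0 : Fin d) : ℕ)) % d) := (h1 _).symm
              _ = ω ^ ((i0 + (a - i0) : Fin d) : ℕ) := by rw [h2]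
              _ = ω ^ (a : ℕ) := by rw [add_sub_cancel]
          rw [← mul_assoc, ← mul_pow, hadd]
        rw [h, mul_zero] at hphase
        exact hphase.symm
      have hw : (weylU i0 j0) *ᵥ (fun _ => (c : ℂ))
          = fun a => (ω ^ ((a - i0 : Fin d) : ℕ)) ^ (j0 : ℕ) * (c : ℂ) := by
        rw [weylU_mulVec]
      rw [hw]
      have heq : (star fun a => (ω ^ ((a - i0 : Fin d) : ℕ)) ^ (j0 : ℕ) * (c : ℂ)) ⬝ᵥ x
          = (c : ℂ) * star S := by
        rw [hSdef]
        simp only [dotProduct, Pi.star_apply, star_mul', star_sum, Finset.mul_sum,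
          Complex.star_def, Complex.conj_ofReal]
        refine Finset.sum_congr rfl fun a _ => ?_
        have : (starRingEnd ℂ) (y a) = x a := by simp [hydef]
        rw [this]
        ring
      rw [heq]
      exact mul_ne_zero hcne (star_ne_zero.mpr hS)
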